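/- Let ι be a finite nonempty index set, let y : ι → ℝ and δ : ι → ℝ with 0 ≤ δ_i ≤ 1 for all i, and let ε ∈ (0,1). Then (ln(Σ_{i∈ι} (1−ε)^{y_i+δ_i}) − ln(Σ_{i∈ι} (1−ε)^{y_i})) / ln(1−ε) ≥ (1−ε) · (Σ_{i∈ι} δ_i (1−ε)^{y_i}) / (Σ_{i∈ι} (1−ε)^{y_i}). In words: if each exponent increases by at most 1, the smoothed minimum lmin(y) := log_{1−ε} Σ_i (1−ε)^{y_i} increases by at least (1−ε) times the weighted average increase Σ_i δ_i (1−ε)^{y_i} / Σ_i (1−ε)^{y_i}. -/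

import Mathlib

/-- If each exponent increases by `δ_i ∈ [0,1]`, the smoothed minimum
`lmin(y) = log_{1−ε} ∑_i (1−ε)^{y_i}` increases by at least `(1−ε)` times the weighted
average increase `∑_i δ_i (1−ε)^{y_i} / ∑_i (1−ε)^{y_i}`. -/
theorem lmin_increase_ge
    (ι : Type*) [Fintype ι] [Nonempty ι]
    (y δ : ι → ℝ) (hδ0 : ∀ i, 0 ≤ δ i) (hδ1 : ∀ i, δ i ≤ 1)
    (ε : ℝ) (hε : ε ∈ Set.Ioo (0 : ℝ) 1) :
    (1 - ε) * (∑ i, δ i * (1 - ε) ^ (y i)) / (∑ i, (1 - ε) ^ (y i))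
      ≤ (Real.log (∑ i, (1 - ε) ^ (y i + δ i)) - Real.log (∑ i, (1 - ε) ^ (y i)))
          / Real.log (1 - ε) := by
  obtain ⟨hε0, hε1⟩ := hε
  set b : ℝ := 1 - ε with hbdef
  have hb0 : 0 < b := by simp only [hbdef]; linarith
  have hb1 : b < 1 := by simp only [hbdef]; linarith
  have hlb : Real.log b < 0 := Real.log_neg hb0 hb1
  set S : ℝ := ∑ i, b ^ (y i) with hSdef
  set T : ℝ := ∑ i, δ i * b ^ (y i) with hTdef
  set S' : ℝ := ∑ i, b ^ (y i + δ i) with hS'def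
  have hSpos : 0 < S :=
    Finset.sum_pos (fun i _ => Real.rpow_pos_of_pos hb0 _) Finset.univ_nonempty
  have hS'pos : 0 < S' :=
    Finset.sum_pos (fun i _ => Real.rpow_pos_of_pos hb0 _) Finset.univ_nonempty
  have hT0 : 0 ≤ T :=
    Finset.sum_nonneg fun i _ => mul_nonneg (hδ0 i) (Real.rpow_pos_of_pos hb0 _).le
  have hTS : T ≤ S := Finset.sum_le_sum fun i _ => by
    nlinarith [Real.rpow_pos_of_pos hb0 (y i), hδ1 i]
  -- pointwise bound b^(y+δ) ≤ b^y (1 - εδ)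
  have hpt : ∀ i, b ^ (y i + δ i) ≤ b ^ (y i) * (1 - ε * δ i) := by
    intro i
    have hbd : b ^ (δ i) ≤ 1 - ε * δ i := by
      have hconv := convexOn_exp.2 (Set.mem_univ (0:ℝ)) (Set.mem_univ (Real.log b))
        (by linarith [hδ1 i] : (0:ℝ) ≤ 1 - δ i) (hδ0 i) (by ring)
      simp only [smul_eq_mul, mul_zero, zero_add, Real.exp_zero, Real.exp_log hb0] at hconv
      rw [Real.rpow_def_of_pos hb0, mul_comm]
      calc Real.exp (δ i * Real.log b) ≤ (1 - δ i) * 1 + δ i * b := hconv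
        _ = 1 - ε * δ i := by rw [hbdef]; ring
    calc b ^ (y i + δ i) = b ^ (y i) * b ^ (δ i) := Real.rpow_add hb0 _ _
      _ ≤ b ^ (y i) * (1 - ε * δ i) :=
          mul_le_mul_of_nonneg_left hbd (Real.rpow_pos_of_pos hb0 _).le
  have hS'le : S' ≤ S - ε * T := by
    have h := Finset.sum_le_sum (fun i (_ : i ∈ Finset.univ) => hpt i)
    calc S' ≤ ∑ i, b ^ (y i) * (1 - ε * δ i) := h
      _ = S - ε * T := by
          rw [hSdef, hTdef, Finset.mul_sum, ← Finset.sum_sub_distrib]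
          apply Finset.sum_congr rfl
          intro i _
          ring
  have hSmT : 0 < S - ε * T := by nlinarith
  -- key: -ε ≤ b * log b
  have hblb : -ε ≤ b * Real.log b := by
    have h := Real.log_le_sub_one_of_pos (x := b⁻¹) (by positivity)
    rw [Real.log_inv] at h
    have hb0' := hb0
    rw [inv_eq_one_div] at h
    have h' := mul_le_mul_of_nonneg_left h hb0.le
    have hbinv : b * (1 / b) = 1 := by field_simp
    nlinarith
  rw [le_div_iff_of_neg hlb]
  have h1 : Real.log S' ≤ Real.log (S - ε * T) := Real.log_le_log hS'pos hS'le
  have h2 : Real.log (S - ε * T) - Real.log S = Real.log ((S - ε * T) / S) :=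
    (Real.log_div (ne_of_gt hSmT) (ne_of_gt hSpos)).symm
  have h3 : Real.log ((S - ε * T) / S) ≤ (S - ε * T) / S - 1 :=
    Real.log_le_sub_one_of_pos (by positivity)
  have h4 : (S - ε * T) / S - 1 = -ε * (T / S) := by field_simp; ring
  have h5 : -ε * (T / S) ≤ (b * Real.log b) * (T / S) :=
    mul_le_mul_of_nonneg_right hblb (by positivity)
  have h6 : (b * Real.log b) * (T / S) = b * T / S * Real.log b := by ring
  linarith [h1, h3]
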